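/- arXiv:2307.15662 — 3 statements merged into one kernel-verified Lean document; each statement's English description precedes it below -/
import Mathlib

section
/- For every x ∈ ℝ^d one has ⟨∇V(x), x⟩ ≥ 2 V(x); in particular ⟨∇V(x), x⟩ > 0 for all x ≠ 0. -/
open scoped RealInnerProductSpace BigOperators

/-- Action of a `d × d` real matrix on `ℝ^d` (Euclidean space). -/
noncomputable def mApp {d : ℕ} (P : Matrix (Fin d) (Fin d) ℝ)
    (x : EuclideanSpace ℝ (Fin d)) : EuclideanSpace ℝ (Fin d) :=
  Matrix.toEuclideanLin P x

/-- `σ(x) = ⟨x, P(x − μ)⟩`. -/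
noncomputable def sig {d : ℕ} (P : Matrix (Fin d) (Fin d) ℝ)
    (μ x : EuclideanSpace ℝ (Fin d)) : ℝ :=
  ⟪x, mApp P (x - μ)⟫

/-- Candidate control Lyapunov function
`V(x) = ⟨x, P₀ x⟩ + Σ_{l=1}^{L} max(σ_l(x), 0)²`. -/
noncomputable def V {d L : ℕ} (P₀ : Matrix (Fin d) (Fin d) ℝ)
    (P : Fin L → Matrix (Fin d) (Fin d) ℝ) (μ : Fin L → EuclideanSpace ℝ (Fin d))
    (x : EuclideanSpace ℝ (Fin d)) : ℝ :=
  ⟪x, mApp P₀ x⟫ + ∑ l, max (sig (P l) (μ l) x) 0 ^ 2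

/-- The gradient formula
`∇V(x) = 2 P₀ x + 2 Σ_{l=1}^{L} max(σ_l(x), 0) · P_l (2x − μ_l)`. -/
noncomputable def gradV {d L : ℕ} (P₀ : Matrix (Fin d) (Fin d) ℝ)
    (P : Fin L → Matrix (Fin d) (Fin d) ℝ) (μ : Fin L → EuclideanSpace ℝ (Fin d))
    (x : EuclideanSpace ℝ (Fin d)) : EuclideanSpace ℝ (Fin d) :=
  (2 : ℝ) • mApp P₀ x +
    (2 : ℝ) • ∑ l, max (sig (P l) (μ l) x) 0 • mApp (P l) ((2 : ℝ) • x - μ l)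

lemma quad_nonneg {d : ℕ} {P : Matrix (Fin d) (Fin d) ℝ} (hP : P.PosDef)
    (x : EuclideanSpace ℝ (Fin d)) : 0 ≤ ⟪x, mApp P x⟫ := by
  have h := hP.posSemidef.re_dotProduct_nonneg (WithLp.equiv 2 _ x)
  simpa [mApp, Matrix.toEuclideanLin_apply, PiLp.inner_apply, dotProduct,
    mul_comm] using h

lemma quad_pos {d : ℕ} {P : Matrix (Fin d) (Fin d) ℝ} (hP : P.PosDef)
    {x : EuclideanSpace ℝ (Fin d)} (hx : x ≠ 0) : 0 < ⟪x, mApp P x⟫ := by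
  have hx' : (WithLp.equiv 2 _ x) ≠ 0 := by simpa using hx
  have h := hP.re_dotProduct_pos hx'
  simpa [mApp, Matrix.toEuclideanLin_apply, PiLp.inner_apply, dotProduct,
    mul_comm] using h

lemma grad_inner {d L : ℕ} (P₀ : Matrix (Fin d) (Fin d) ℝ)
    (P : Fin L → Matrix (Fin d) (Fin d) ℝ) (μ : Fin L → EuclideanSpace ℝ (Fin d))
    (x : EuclideanSpace ℝ (Fin d)) :
    ⟪gradV P₀ P μ x, x⟫ = 2 * ⟪x, mApp P₀ x⟫ +
      2 * ∑ l, max (sig (P l) (μ l) x) 0 * (⟪x, mApp (P l) x⟫ + sig (P l) (μ l) x) := by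
  have h2 : ∀ l, mApp (P l) ((2 : ℝ) • x - μ l)
      = mApp (P l) x + mApp (P l) (x - μ l) := by
    intro l
    unfold mApp
    rw [← map_add]
    congr 1
    rw [two_smul]; abel
  simp only [gradV, inner_add_left, real_inner_smul_left, sum_inner, h2,
    inner_add_left, mul_add, sig]
  rw [real_inner_comm (mApp P₀ x) x]
  congr 2
  refine Finset.sum_congr rfl fun l _ => ?_
  rw [real_inner_comm (mApp (P l) x) x, real_inner_comm (mApp (P l) (x - μ l)) x]

/-- for every `x`, `⟨∇V(x), x⟩ ≥ 2 V(x)`; in particular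
`⟨∇V(x), x⟩ > 0` for all `x ≠ 0`. -/
theorem stmt_6 {d L : ℕ} (P₀ : Matrix (Fin d) (Fin d) ℝ)
    (P : Fin L → Matrix (Fin d) (Fin d) ℝ) (μ : Fin L → EuclideanSpace ℝ (Fin d))
    (hP₀ : P₀.PosDef) (hP : ∀ l, (P l).PosDef) :
    (∀ x : EuclideanSpace ℝ (Fin d), 2 * V P₀ P μ x ≤ ⟪gradV P₀ P μ x, x⟫) ∧
      ∀ x : EuclideanSpace ℝ (Fin d), x ≠ 0 → 0 < ⟪gradV P₀ P μ x, x⟫ := by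
  have key : ∀ x : EuclideanSpace ℝ (Fin d), 2 * V P₀ P μ x ≤ ⟪gradV P₀ P μ x, x⟫ := by
    intro x
    rw [grad_inner, V, mul_add]
    gcongr 2 * ⟪x, mApp P₀ x⟫ + 2 * ?_
    refine Finset.sum_le_sum fun l _ => ?_
    have hm : 0 ≤ max (sig (P l) (μ l) x) 0 := le_max_right _ _
    have hq := quad_nonneg (hP l) x
    have hms : max (sig (P l) (μ l) x) 0 ^ 2
        = max (sig (P l) (μ l) x) 0 * sig (P l) (μ l) x := by
      rcases le_or_gt (sig (P l) (μ l) x) 0 with h | h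
      · rw [max_eq_right h]; ring
      · rw [max_eq_left h.le]; ring
    rw [hms]
    nlinarith
  refine ⟨key, fun x hx => ?_⟩
  have h1 := key x
  have h2 : 0 < V P₀ P μ x := by
    have : (0:ℝ) ≤ ∑ l, max (sig (P l) (μ l) x) 0 ^ 2 :=
      Finset.sum_nonneg fun l _ => sq_nonneg _
    unfold V
    nlinarith [quad_pos hP₀ hx]
  linarith
end

section
/- Consider the perturbed closed-loop system ẋ = f̂(x) + û(x) + e(t), where f̂ : ℝ^d → ℝ^d is any map, û is the Sontag feedback (with a(y) = ⟨∇V(y), f̂(y)⟩, ρ(y) = ρ₀·√(a(y)² + ‖∇V(y)‖⁴), ρ₀ > 0, û(y) = −(a(y) + ρ(y))·∇V(y)/‖∇V(y)‖² if ∇V(y) ≠ 0 and a(y) + ρ(y) > 0, else û(y) = 0), and e : [0,∞) → ℝ^d is a disturbance with ‖e(t)‖² ≤ κ for all t, κ > 0. Let λ > 0 satisfy ⟨x, P₀ x⟩ ≥ λ‖x‖² for all x. Then every differentiable solution x : [0,∞) → ℝ^d with x′(t) = f̂(x(t)) + û(x(t)) + e(t) for all t ≥ 0 satisfies V(x(t))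 ≤ max( V(x(0)), 2κ/(λ ρ₀²) ) for all t ≥ 0; in particular all closed-loop trajectories are globally bounded. -/
open scoped RealInnerProductSpace BigOperators

/-- `a(y) = ⟨∇V(y), f̂(y)⟩`. -/
noncomputable def aFun {d L : ℕ} (P₀ : Matrix (Fin d) (Fin d) ℝ)
    (P : Fin L → Matrix (Fin d) (Fin d) ℝ) (μ : Fin L → EuclideanSpace ℝ (Fin d))
    (fhat : EuclideanSpace ℝ (Fin d) → EuclideanSpace ℝ (Fin d))
    (y : EuclideanSpace ℝ (Fin d)) : ℝ :=
  ⟪gradV P₀ P μ y, fhat y⟫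

/-- `ρ(y) = ρ₀·√(a(y)² + ‖∇V(y)‖⁴)`. -/
noncomputable def rhoFun {d L : ℕ} (P₀ : Matrix (Fin d) (Fin d) ℝ)
    (P : Fin L → Matrix (Fin d) (Fin d) ℝ) (μ : Fin L → EuclideanSpace ℝ (Fin d))
    (fhat : EuclideanSpace ℝ (Fin d) → EuclideanSpace ℝ (Fin d)) (ρ₀ : ℝ)
    (y : EuclideanSpace ℝ (Fin d)) : ℝ :=
  ρ₀ * Real.sqrt (aFun P₀ P μ fhat y ^ 2 + ‖gradV P₀ P μ y‖ ^ 4)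

open Classical in
/-- The Sontag feedback: `û(y) = −(a(y) + ρ(y))·∇V(y)/‖∇V(y)‖²` if `∇V(y) ≠ 0` and
`a(y) + ρ(y) > 0`, and `û(y) = 0` otherwise. -/
noncomputable def uhat {d L : ℕ} (P₀ : Matrix (Fin d) (Fin d) ℝ)
    (P : Fin L → Matrix (Fin d) (Fin d) ℝ) (μ : Fin L → EuclideanSpace ℝ (Fin d))
    (fhat : EuclideanSpace ℝ (Fin d) → EuclideanSpace ℝ (Fin d)) (ρ₀ : ℝ)
    (y : EuclideanSpace ℝ (Fin d)) : EuclideanSpace ℝ (Fin d) :=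
  if gradV P₀ P μ y ≠ 0 ∧ 0 < aFun P₀ P μ fhat y + rhoFun P₀ P μ fhat ρ₀ y then
    (-((aFun P₀ P μ fhat y + rhoFun P₀ P μ fhat ρ₀ y) / ‖gradV P₀ P μ y‖ ^ 2)) •
      gradV P₀ P μ y
  else 0

lemma mApp_add {d : ℕ} (P : Matrix (Fin d) (Fin d) ℝ) (a b : EuclideanSpace ℝ (Fin d)) :
    mApp P (a + b) = mApp P a + mApp P b := by simp [mApp]


lemma mApp_symm {d : ℕ} {P : Matrix (Fin d) (Fin d) ℝ} (hP : P.IsHermitian)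
    (u v : EuclideanSpace ℝ (Fin d)) : ⟪mApp P u, v⟫ = ⟪u, mApp P v⟫ :=
  (Matrix.isHermitian_iff_isSymmetric.mp hP) u v


lemma mApp_nonneg {d : ℕ} {P : Matrix (Fin d) (Fin d) ℝ} (hP : P.PosSemidef)
    (y : EuclideanSpace ℝ (Fin d)) : 0 ≤ ⟪y, mApp P y⟫ := by
  have := hP.re_dotProduct_nonneg (x := (y : Fin d → ℝ))
  simpa [mApp, Matrix.toEuclideanLin_apply, EuclideanSpace.inner_eq_star_dotProduct,
    dotProduct, mul_comm] using this


lemma hasDerivAt_mApp {d : ℕ} (Q : Matrix (Fin d) (Fin d) ℝ)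
    {x : ℝ → EuclideanSpace ℝ (Fin d)} {v : EuclideanSpace ℝ (Fin d)} {t : ℝ}
    (h : HasDerivAt x v t) : HasDerivAt (fun s => mApp Q (x s)) (mApp Q v) t := by
  have := (LinearMap.toContinuousLinearMap (Matrix.toEuclideanLin Q)).hasFDerivAt.comp_hasDerivAt t h
  exact this


lemma hasDerivAt_maxsq (r : ℝ) :
    HasDerivAt (fun s : ℝ => max s 0 ^ 2) (2 * max r 0) r := by
  rcases lt_trichotomy r 0 with h | h | h
  · have he : (fun s : ℝ => max s 0 ^ 2) =ᶠ[nhds r] fun _ => (0:ℝ) := by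
      filter_upwards [Iio_mem_nhds h] with s hs
      simp [max_eq_right (le_of_lt (Set.mem_Iio.mp hs))]
    have := (hasDerivAt_const r (0:ℝ)).congr_of_eventuallyEq he
    simpa [max_eq_right h.le] using this
  · subst h
    rw [hasDerivAt_iff_isLittleO]
    simp only [max_self, sub_zero, smul_zero, sub_zero, ne_eq]
    rw [Asymptotics.isLittleO_iff]
    intro c hc
    filter_upwards [Metric.ball_mem_nhds (0:ℝ) hc] with s hs
    simp only [Metric.mem_ball, Real.dist_eq, sub_zero] at hs
    have h1 : max s 0 ^ 2 ≤ |s| * |s| := by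
      rcases le_or_gt s 0 with hs0 | hs0
      · simp [max_eq_right hs0, mul_self_nonneg]
      · rw [max_eq_left hs0.le, abs_of_pos hs0]; ring_nf; nlinarith
    have h2 : ‖max s 0 ^ 2 - max (0:ℝ) 0 ^ 2‖ ≤ c * ‖s‖ := by
      simp only [max_self, ne_eq]
      rw [Real.norm_eq_abs, Real.norm_eq_abs]
      have : |max s 0 ^ 2 - 0 ^ 2| = max s 0 ^ 2 := by
        rw [(by ring : max s 0 ^ 2 - 0 ^ 2 = max s 0 ^ 2), abs_of_nonneg (by positivity)]
      rw [this]
      calc max s 0 ^ 2 ≤ |s| * |s| := h1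
        _ ≤ c * |s| := by nlinarith [abs_nonneg s]
    simpa using h2
  · have he : (fun s : ℝ => max s 0 ^ 2) =ᶠ[nhds r] fun s => s ^ 2 := by
      filter_upwards [Ioi_mem_nhds h] with s hs
      simp [max_eq_left (le_of_lt (Set.mem_Ioi.mp hs))]
    have := ((hasDerivAt_pow 2 r)).congr_of_eventuallyEq he
    simpa [max_eq_left h.le, mul_comm] using this


lemma inner_gradV {d L : ℕ} (P₀ : Matrix (Fin d) (Fin d) ℝ)
    (P : Fin L → Matrix (Fin d) (Fin d) ℝ) (μ : Fin L → EuclideanSpace ℝ (Fin d))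
    (y v : EuclideanSpace ℝ (Fin d)) :
    ⟪gradV P₀ P μ y, v⟫ = 2 * ⟪mApp P₀ y, v⟫ +
      ∑ l, 2 * max (sig (P l) (μ l) y) 0 * ⟪mApp (P l) ((2 : ℝ) • y - μ l), v⟫ := by
  rw [gradV, inner_add_left, real_inner_smul_left, real_inner_smul_left, sum_inner,
    Finset.mul_sum]
  congr 1
  refine Finset.sum_congr rfl fun l _ => ?_
  rw [real_inner_smul_left]; ring


lemma hasDerivAt_V {d L : ℕ} {P₀ : Matrix (Fin d) (Fin d) ℝ}
    {P : Fin L → Matrix (Fin d) (Fin d) ℝ} {μ : Fin L → EuclideanSpace ℝ (Fin d)}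
    (hP₀ : P₀.IsHermitian) (hP : ∀ l, (P l).IsHermitian)
    {x : ℝ → EuclideanSpace ℝ (Fin d)} {v : EuclideanSpace ℝ (Fin d)} {t : ℝ}
    (hx : HasDerivAt x v t) :
    HasDerivAt (fun s => V P₀ P μ (x s)) ⟪gradV P₀ P μ (x t), v⟫ t := by
  have h0 : HasDerivAt (fun s => (⟪x s, mApp P₀ (x s)⟫ : ℝ))
      (⟪x t, mApp P₀ v⟫ + ⟪v, mApp P₀ (x t)⟫) t :=
    hx.inner ℝ (hasDerivAt_mApp P₀ hx)
  have hsig : ∀ l, HasDerivAt (fun s => sig (P l) (μ l) (x s))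
      (⟪x t, mApp (P l) v⟫ + ⟪v, mApp (P l) (x t - μ l)⟫) t := by
    intro l
    have := hx.inner ℝ (hasDerivAt_mApp (P l) (hx.sub_const (μ l)))
    simpa [sig] using this
  have hterm : ∀ l, HasDerivAt (fun s => max (sig (P l) (μ l) (x s)) 0 ^ 2)
      (2 * max (sig (P l) (μ l) (x t)) 0 *
        (⟪x t, mApp (P l) v⟫ + ⟪v, mApp (P l) (x t - μ l)⟫)) t := by
    intro l
    have := (hasDerivAt_maxsq (sig (P l) (μ l) (x t))).comp t (hsig l)
    simpa [Function.comp_def] using this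
  have hsum := HasDerivAt.fun_sum (u := Finset.univ)
    (A := fun l s => max (sig (P l) (μ l) (x s)) 0 ^ 2) (fun l _ => hterm l)
  have htot := h0.add hsum
  have heq : ⟪x t, mApp P₀ v⟫ + ⟪v, mApp P₀ (x t)⟫ +
      ∑ l, 2 * max (sig (P l) (μ l) (x t)) 0 *
        (⟪x t, mApp (P l) v⟫ + ⟪v, mApp (P l) (x t - μ l)⟫)
      = ⟪gradV P₀ P μ (x t), v⟫ := by
    have hsumeq : ∑ l, 2 * max (sig (P l) (μ l) (x t)) 0 *
        (⟪x t, mApp (P l) v⟫ + ⟪v, mApp (P l) (x t - μ l)⟫)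
        = ∑ l, 2 * max (sig (P l) (μ l) (x t)) 0 * ⟪mApp (P l) ((2:ℝ) • x t - μ l), v⟫ := by
      refine Finset.sum_congr rfl fun l _ => ?_
      have e1 : ⟪x t, mApp (P l) v⟫ = ⟪mApp (P l) (x t), v⟫ := (mApp_symm (hP l) _ _).symm
      have e2 : ⟪v, mApp (P l) (x t - μ l)⟫ = ⟪mApp (P l) (x t - μ l), v⟫ := real_inner_comm _ _
      have e4 : (2:ℝ) • x t - μ l = x t + (x t - μ l) := by module
      have e3 : mApp (P l) ((2:ℝ) • x t - μ l) = mApp (P l) (x t) + mApp (P l) (x t - μ l) := by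
        rw [e4, mApp_add]
      rw [e1, e2, e3, inner_add_left]
    have e0 : ⟪x t, mApp P₀ v⟫ = ⟪mApp P₀ (x t), v⟫ := (mApp_symm hP₀ (x t) v).symm
    have e0' : ⟪v, mApp P₀ (x t)⟫ = ⟪mApp P₀ (x t), v⟫ := real_inner_comm _ _
    rw [inner_gradV, hsumeq, e0, e0']
    ring
  unfold V
  rw [← heq]
  exact htot


lemma sum_maxsq_nonneg {d L : ℕ} (P : Fin L → Matrix (Fin d) (Fin d) ℝ)
    (μ : Fin L → EuclideanSpace ℝ (Fin d)) (y : EuclideanSpace ℝ (Fin d)) :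
    0 ≤ ∑ l, max (sig (P l) (μ l) y) 0 ^ 2 :=
  Finset.sum_nonneg fun l _ => by positivity


lemma grad_sq_lower {d L : ℕ} {P₀ : Matrix (Fin d) (Fin d) ℝ}
    {P : Fin L → Matrix (Fin d) (Fin d) ℝ} {μ : Fin L → EuclideanSpace ℝ (Fin d)}
    (hP₀ : P₀.PosDef) (hP : ∀ l, (P l).PosDef) {lam : ℝ} (hlam : 0 < lam)
    (hlb : ∀ x : EuclideanSpace ℝ (Fin d), lam * ‖x‖ ^ 2 ≤ ⟪x, mApp P₀ x⟫)
    (y : EuclideanSpace ℝ (Fin d)) :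
    4 * lam * V P₀ P μ y ≤ ‖gradV P₀ P μ y‖ ^ 2 := by
  have hc1 : 2 * V P₀ P μ y ≤ ⟪gradV P₀ P μ y, y⟫ := by
    rw [inner_gradV]
    have h0 : ⟪mApp P₀ y, y⟫ = ⟪y, mApp P₀ y⟫ := real_inner_comm _ _
    have hterm : ∀ l : Fin L, 2 * max (sig (P l) (μ l) y) 0 ^ 2 ≤
        2 * max (sig (P l) (μ l) y) 0 * ⟪mApp (P l) ((2:ℝ) • y - μ l), y⟫ := by
      intro l
      have e4 : (2:ℝ) • y - μ l = y + (y - μ l) := by module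
      have e3 : ⟪mApp (P l) ((2:ℝ) • y - μ l), y⟫
          = ⟪y, mApp (P l) y⟫ + sig (P l) (μ l) y := by
        rw [e4, mApp_add, inner_add_left]
        simp only [sig]
        first
        | exact congrArg₂ (· + ·) (real_inner_comm _ _) (real_inner_comm _ _)
        | exact congrArg₂ (· + ·) (real_inner_comm _ _).symm (real_inner_comm _ _).symm
      rw [e3]
      have hq : 0 ≤ ⟪y, mApp (P l) y⟫ := mApp_nonneg (hP l).posSemidef y
      rcases le_or_gt (sig (P l) (μ l) y) 0 with hs | hs
      · simp [max_eq_right hs]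
      · rw [max_eq_left hs.le]; nlinarith
    have hsum := Finset.sum_le_sum (fun l (_ : l ∈ Finset.univ) => hterm l)
    rw [V]
    have hmul : (∑ l, 2 * max (sig (P l) (μ l) y) 0 ^ 2)
        = 2 * ∑ l, max (sig (P l) (μ l) y) 0 ^ 2 := (Finset.mul_sum _ _ _).symm
    linarith [hsum, h0, hmul]
  have hcs : ⟪gradV P₀ P μ y, y⟫ ≤ ‖gradV P₀ P μ y‖ * ‖y‖ := real_inner_le_norm _ _
  have h4 : 2 * V P₀ P μ y ≤ ‖gradV P₀ P μ y‖ * ‖y‖ := hc1.trans hcs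
  have hVlb : lam * ‖y‖ ^ 2 ≤ V P₀ P μ y := by
    have := sum_maxsq_nonneg P μ y
    have := hlb y
    rw [V]; linarith
  have hV0 : 0 ≤ V P₀ P μ y := le_trans (by positivity) hVlb
  rcases eq_or_lt_of_le hV0 with hV | hV
  · rw [← hV]
    simpa using sq_nonneg ‖gradV P₀ P μ y‖
  · have h5 : 4 * V P₀ P μ y ^ 2 ≤ ‖gradV P₀ P μ y‖ ^ 2 * ‖y‖ ^ 2 := by
      nlinarith [h4, hV0, mul_nonneg (norm_nonneg (gradV P₀ P μ y)) (norm_nonneg y)]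
    have hy0 : 0 < ‖y‖ ^ 2 := by
      rcases (le_or_gt (‖y‖ ^ 2) 0) with hy | hy
      · exfalso
        have : ‖gradV P₀ P μ y‖ ^ 2 * ‖y‖ ^ 2 ≤ 0 := by
          have := sq_nonneg (‖gradV P₀ P μ y‖)
          nlinarith [sq_nonneg ‖y‖]
        nlinarith
      · exact hy
    nlinarith [h5, hVlb, hy0, hV]


lemma sontag_bound {d L : ℕ} (P₀ : Matrix (Fin d) (Fin d) ℝ)
    (P : Fin L → Matrix (Fin d) (Fin d) ℝ) (μ : Fin L → EuclideanSpace ℝ (Fin d))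
    (fhat : EuclideanSpace ℝ (Fin d) → EuclideanSpace ℝ (Fin d))
    {ρ₀ : ℝ} (hρ₀ : 0 < ρ₀) (y : EuclideanSpace ℝ (Fin d)) :
    ⟪gradV P₀ P μ y, fhat y + uhat P₀ P μ fhat ρ₀ y⟫ ≤ -(ρ₀ * ‖gradV P₀ P μ y‖ ^ 2) := by
  set g := gradV P₀ P μ y with hg
  set a := aFun P₀ P μ fhat y with ha
  set r := rhoFun P₀ P μ fhat ρ₀ y with hr
  have hrge : ρ₀ * ‖g‖ ^ 2 ≤ r := by
    rw [hr, rhoFun]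
    have h1 : Real.sqrt (‖g‖ ^ 4) ≤ Real.sqrt (a ^ 2 + ‖g‖ ^ 4) :=
      Real.sqrt_le_sqrt (by nlinarith [sq_nonneg a])
    have h2 : Real.sqrt (‖g‖ ^ 4) = ‖g‖ ^ 2 := by
      rw [show ‖g‖ ^ 4 = (‖g‖ ^ 2) ^ 2 by ring, Real.sqrt_sq (by positivity)]
    have := h1
    rw [h2] at this
    calc ρ₀ * ‖g‖ ^ 2 ≤ ρ₀ * Real.sqrt (a ^ 2 + ‖g‖ ^ 4) := by
          exact mul_le_mul_of_nonneg_left this hρ₀.le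
      _ = _ := rfl
  have hafun : ⟪g, fhat y⟫ = a := rfl
  rw [inner_add_right, hafun]
  unfold uhat
  split_ifs with h
  · obtain ⟨hgne, hpos⟩ := h
    rw [inner_smul_right, real_inner_self_eq_norm_sq]
    have hgn : ‖g‖ ^ 2 ≠ 0 := pow_ne_zero 2 (norm_ne_zero_iff.mpr hgne)
    have : a + -((a + r) / ‖g‖ ^ 2) * ‖g‖ ^ 2 = -r := by
      rw [neg_mul, div_mul_cancel₀ _ hgn]; ring
    rw [← hg, ← ha, ← hr] at *
    linarith [hrge, this.le, this.ge]
  · rw [inner_zero_right]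
    push_neg at h
    rcases eq_or_ne g 0 with hg0 | hg0
    · have : a = 0 := by rw [ha, aFun, ← hg, hg0, inner_zero_left]
      rw [this, hg0]
      simp
    · have hle : a + r ≤ 0 := h hg0
      linarith


lemma key_bound {d L : ℕ} {P₀ : Matrix (Fin d) (Fin d) ℝ}
    {P : Fin L → Matrix (Fin d) (Fin d) ℝ} {μ : Fin L → EuclideanSpace ℝ (Fin d)}
    (hP₀ : P₀.PosDef) (hP : ∀ l, (P l).PosDef)
    (fhat : EuclideanSpace ℝ (Fin d) → EuclideanSpace ℝ (Fin d))
    {ρ₀ : ℝ} (hρ₀ : 0 < ρ₀) {κ : ℝ} (hκ : 0 < κ) {lam : ℝ} (hlam : 0 < lam)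
    (hlb : ∀ x : EuclideanSpace ℝ (Fin d), lam * ‖x‖ ^ 2 ≤ ⟪x, mApp P₀ x⟫)
    (y e' : EuclideanSpace ℝ (Fin d)) (he' : ‖e'‖ ^ 2 ≤ κ) :
    ⟪gradV P₀ P μ y, fhat y + uhat P₀ P μ fhat ρ₀ y + e'⟫ ≤
      -(2 * lam * ρ₀) * V P₀ P μ y + κ / (2 * ρ₀) := by
  have h1 := sontag_bound P₀ P μ fhat hρ₀ y
  have h3 := grad_sq_lower (μ := μ) hP₀ hP hlam hlb y
  set g := gradV P₀ P μ y with hg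
  have h2 : ⟪g, e'⟫ ≤ ρ₀ / 2 * ‖g‖ ^ 2 + κ / (2 * ρ₀) := by
    have hI := real_inner_le_norm g e'
    have h3' : (0:ℝ) < 2 * ρ₀ := by linarith
    have hE : ‖g‖ * ‖e'‖ ≤ (ρ₀ ^ 2 * ‖g‖ ^ 2 + ‖e'‖ ^ 2) / (2 * ρ₀) := by
      rw [le_div_iff₀ h3']
      nlinarith [sq_nonneg (ρ₀ * ‖g‖ - ‖e'‖)]
    have hE2 : (ρ₀ ^ 2 * ‖g‖ ^ 2 + ‖e'‖ ^ 2) / (2 * ρ₀) ≤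
        ρ₀ / 2 * ‖g‖ ^ 2 + κ / (2 * ρ₀) := by
      rw [div_le_iff₀ h3']
      have : ρ₀ / 2 * ‖g‖ ^ 2 * (2 * ρ₀) = ρ₀ ^ 2 * ‖g‖ ^ 2 := by ring
      have hκd : κ / (2 * ρ₀) * (2 * ρ₀) = κ := by field_simp
      nlinarith [he']
    linarith [hI.trans (hE.trans hE2)]
  rw [inner_add_right]
  have h4 : -(ρ₀ * ‖g‖ ^ 2) + (ρ₀ / 2 * ‖g‖ ^ 2 + κ / (2 * ρ₀)) =
      -(ρ₀ / 2) * ‖g‖ ^ 2 + κ / (2 * ρ₀) := by ring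
  have h5 : -(ρ₀ / 2) * ‖g‖ ^ 2 ≤ -(ρ₀ / 2) * (4 * lam * V P₀ P μ y) := by
    have := mul_le_mul_of_nonneg_left h3 (by positivity : (0:ℝ) ≤ ρ₀ / 2)
    linarith
  have h6 : -(ρ₀ / 2) * (4 * lam * V P₀ P μ y) = -(2 * lam * ρ₀) * V P₀ P μ y := by ring
  linarith [h1, h2]

/-- for the perturbed closed-loop system `ẋ = f̂(x) + û(x) + e(t)` with
the Sontag feedback `û` (ρ₀ > 0) and a disturbance `e` with `‖e(t)‖² ≤ κ`, `κ > 0`,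
if `λ > 0` satisfies `⟨x, P₀ x⟩ ≥ λ‖x‖²` for all `x`, then every differentiable
solution `x : [0,∞) → ℝ^d` satisfies `V(x(t)) ≤ max(V(x(0)), 2κ/(λ ρ₀²))` for all
`t ≥ 0`; in particular all closed-loop trajectories are globally bounded. -/
theorem stmt_15 {d L : ℕ} (P₀ : Matrix (Fin d) (Fin d) ℝ)
    (P : Fin L → Matrix (Fin d) (Fin d) ℝ) (μ : Fin L → EuclideanSpace ℝ (Fin d))
    (hP₀ : P₀.PosDef) (hP : ∀ l, (P l).PosDef)
    (fhat : EuclideanSpace ℝ (Fin d) → EuclideanSpace ℝ (Fin d))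
    (ρ₀ : ℝ) (hρ₀ : 0 < ρ₀) (κ : ℝ) (hκ : 0 < κ)
    (lam : ℝ) (hlam : 0 < lam)
    (hlb : ∀ x : EuclideanSpace ℝ (Fin d), lam * ‖x‖ ^ 2 ≤ ⟪x, mApp P₀ x⟫)
    (e : ℝ → EuclideanSpace ℝ (Fin d)) (he : ∀ t : ℝ, 0 ≤ t → ‖e t‖ ^ 2 ≤ κ)
    (x : ℝ → EuclideanSpace ℝ (Fin d))
    (hx : ∀ t : ℝ, 0 ≤ t →
      HasDerivAt x (fhat (x t) + uhat P₀ P μ fhat ρ₀ (x t) + e t) t) :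
    ∀ t : ℝ, 0 ≤ t →
      V P₀ P μ (x t) ≤ max (V P₀ P μ (x 0)) (2 * κ / (lam * ρ₀ ^ 2)) := by
  intro t ht
  set M := 2 * κ / (lam * ρ₀ ^ 2) with hM
  set C := max (V P₀ P μ (x 0)) M with hC
  by_contra hgt
  push_neg at hgt
  have hder : ∀ s : ℝ, 0 ≤ s → HasDerivAt (fun τ => V P₀ P μ (x τ))
      ⟪gradV P₀ P μ (x s), fhat (x s) + uhat P₀ P μ fhat ρ₀ (x s) + e s⟫ s :=
    fun s hs => hasDerivAt_V hP₀.1 (fun l => (hP l).1) (hx s hs)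
  have hcont : ContinuousOn (fun τ => V P₀ P μ (x τ)) (Set.Icc 0 t) := fun s hs =>
    ((hder s hs.1).continuousAt).continuousWithinAt
  set S := Set.Icc 0 t ∩ (fun τ => V P₀ P μ (x τ)) ⁻¹' Set.Iic C with hSdef
  have hSclosed : IsClosed S :=
    hcont.preimage_isClosed_of_isClosed isClosed_Icc isClosed_Iic
  have hS0 : (0:ℝ) ∈ S := ⟨⟨le_refl 0, ht⟩, by simp [hC]⟩
  have hSbdd : BddAbove S := ⟨t, fun s hs => hs.1.2⟩
  set s₀ := sSup S with hs₀def
  have hs₀mem : s₀ ∈ S := hSclosed.csSup_mem ⟨0, hS0⟩ hSbdd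
  have hs₀0 : 0 ≤ s₀ := hs₀mem.1.1
  have hs₀t : s₀ ≤ t := hs₀mem.1.2
  have hs₀C : V P₀ P μ (x s₀) ≤ C := hs₀mem.2
  have habove : ∀ s, s₀ < s → s ≤ t → C < V P₀ P μ (x s) := by
    intro s h1 h2
    by_contra hle
    push_neg at hle
    have hmem : s ∈ S := ⟨⟨le_trans hs₀0 h1.le, h2⟩, hle⟩
    exact absurd (le_csSup hSbdd hmem) (not_le.mpr h1)
  have hanti : AntitoneOn (fun τ => V P₀ P μ (x τ)) (Set.Icc s₀ t) := by
    apply antitoneOn_of_deriv_nonpos (convex_Icc s₀ t)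
    · exact hcont.mono (Set.Icc_subset_Icc_left hs₀0)
    · intro s hs
      rw [interior_Icc] at hs
      exact ((hder s (le_trans hs₀0 hs.1.le)).differentiableAt).differentiableWithinAt
    · intro s hs
      rw [interior_Icc] at hs
      have hs0 : 0 ≤ s := le_trans hs₀0 hs.1.le
      have hd := hder s hs0
      rw [hd.deriv]
      have hkb := key_bound (μ := μ) hP₀ hP fhat hρ₀ hκ hlam hlb (x s) (e s) (he s hs0)
      have hVs : M ≤ V P₀ P μ (x s) :=
        le_trans (le_max_right _ _) (habove s hs.1 hs.2.le).le
      have hden : (0:ℝ) < lam * ρ₀ ^ 2 := by positivity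
      rw [hM, div_le_iff₀ hden] at hVs
      have hfrac : κ / (2 * ρ₀) ≤ 2 * lam * ρ₀ * V P₀ P μ (x s) := by
        rw [div_le_iff₀ (by positivity : (0:ℝ) < 2 * ρ₀)]
        nlinarith
      linarith [hkb]
  have hfin : V P₀ P μ (x t) ≤ V P₀ P μ (x s₀) :=
    hanti ⟨le_refl s₀, hs₀t⟩ ⟨hs₀t, le_refl t⟩ hs₀t
  linarith [hgt, hs₀C, hfin]
end

section
/- Under the hypotheses of the perturbed closed loop (ẋ = f̂(x) + û(x) + e(t) with Sontag feedback û built from ρ(y) = ρ₀·√(a(y)² + ‖∇V(y)‖⁴), ρ₀ > 0, disturbance bound ‖e(t)‖² ≤ κ with κ > 0, and λ > 0 with ⟨x, P₀ x⟩ ≥ λ‖x‖² for all x), every differentiable solution x : [0,∞) → ℝ^d of the perturbed closed loop satisfies limsup_{t→∞} V(x(t)) ≤ 2κ/(λ ρ₀²); i.e. the trajectories are globally uniformly ultimately bounded and converge to the compact sublevel set {y : V(y) ≤ 2κ/(λ ρ₀²)}. -/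
open scoped RealInnerProductSpace BigOperators

/-! ### Auxiliary lemmas -/

section Aux

open scoped RealInnerProductSpace BigOperators

lemma aux_hasDerivAt_maxsq (s : ℝ) :
    HasDerivAt (fun u : ℝ => max u 0 ^ 2) (2 * max s 0) s := by
  rcases lt_trichotomy s 0 with h | h | h
  · have : (fun u : ℝ => max u 0 ^ 2) =ᶠ[nhds s] fun _ => (0:ℝ) := by
      filter_upwards [eventually_lt_nhds h] with u hu
      simp [max_eq_right hu.le]
    rw [max_eq_right h.le]
    simpa using (hasDerivAt_const s (0:ℝ)).congr_of_eventuallyEq this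
  · subst h
    rw [hasDerivAt_iff_isLittleO]
    simp only [max_self, mul_zero, zero_pow, sub_zero, smul_eq_mul]
    rw [Asymptotics.isLittleO_iff]
    intro c hc
    have : ∀ᶠ u : ℝ in nhds 0, |u| ≤ c := by
      have h0 : Set.Ioo (-c) c ∈ nhds (0:ℝ) := Ioo_mem_nhds (by linarith) hc
      filter_upwards [h0] with u hu
      rw [abs_le]; exact ⟨hu.1.le, hu.2.le⟩
    filter_upwards [this] with u hu
    have h1 : max u 0 ^ 2 ≤ u ^ 2 := by
      rcases le_total u 0 with h' | h'
      · simp [max_eq_right h', sq_nonneg]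
      · simp [max_eq_left h']
    have h2 : (0:ℝ) ≤ max u 0 ^ 2 := sq_nonneg _
    have : |max u 0 ^ 2 - 0| ≤ c * |u| := by
      rw [sub_zero, abs_of_nonneg h2]
      calc max u 0 ^ 2 ≤ u ^ 2 := h1
        _ = |u| * |u| := by rw [← sq_abs, sq]
        _ ≤ c * |u| := by nlinarith [abs_nonneg u]
    simpa [Real.norm_eq_abs] using this
  · have : (fun u : ℝ => max u 0 ^ 2) =ᶠ[nhds s] fun u => u ^ 2 := by
      filter_upwards [eventually_gt_nhds h] with u hu
      simp [max_eq_left hu.le]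
    rw [max_eq_left h.le]
    have h2 : HasDerivAt (fun u : ℝ => u ^ 2) (2 * s) s := by
      simpa using (hasDerivAt_pow 2 s)
    exact h2.congr_of_eventuallyEq this

lemma aux_mApp_symm {d : ℕ} {P : Matrix (Fin d) (Fin d) ℝ} (hP : P.IsHermitian)
    (x y : EuclideanSpace ℝ (Fin d)) : ⟪mApp P x, y⟫ = ⟪x, mApp P y⟫ :=
  (Matrix.isHermitian_iff_isSymmetric.mp hP) x y

lemma aux_mApp_nonneg {d : ℕ} {P : Matrix (Fin d) (Fin d) ℝ} (hP : P.PosSemidef)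
    (x : EuclideanSpace ℝ (Fin d)) : 0 ≤ ⟪x, mApp P x⟫ := by
  have h := hP.re_dotProduct_nonneg ((WithLp.equiv 2 _) x)
  simpa [mApp, Matrix.toEuclideanLin_apply, PiLp.inner_apply, dotProduct,
    Matrix.mulVec, RCLike.re_to_real, mul_comm] using h

lemma aux_hasDerivAt_mApp_comp {d : ℕ} (P : Matrix (Fin d) (Fin d) ℝ)
    (x : ℝ → EuclideanSpace ℝ (Fin d)) (v : EuclideanSpace ℝ (Fin d)) (t : ℝ)
    (hx : HasDerivAt x v t) :
    HasDerivAt (fun s => mApp P (x s)) (mApp P v) t := by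
  have hT := (LinearMap.toContinuousLinearMap
    (Matrix.toEuclideanLin P)).hasFDerivAt (x := x t)
  have := hT.comp_hasDerivAt t hx
  exact this

/-- Chain rule for `V` along a differentiable curve. -/
lemma aux_hasDerivAt_V_comp {d L : ℕ} (P₀ : Matrix (Fin d) (Fin d) ℝ)
    (P : Fin L → Matrix (Fin d) (Fin d) ℝ) (μ : Fin L → EuclideanSpace ℝ (Fin d))
    (hP₀ : P₀.IsHermitian) (hP : ∀ l, (P l).IsHermitian)
    (x : ℝ → EuclideanSpace ℝ (Fin d)) (v : EuclideanSpace ℝ (Fin d)) (t : ℝ)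
    (hx : HasDerivAt x v t) :
    HasDerivAt (fun s => V P₀ P μ (x s)) ⟪gradV P₀ P μ (x t), v⟫ t := by
  have h0 : HasDerivAt (fun s => (⟪x s, mApp P₀ (x s)⟫ : ℝ))
      (⟪x t, mApp P₀ v⟫ + ⟪v, mApp P₀ (x t)⟫) t :=
    hx.inner ℝ (aux_hasDerivAt_mApp_comp P₀ x v t hx)
  have hsig : ∀ l : Fin L, HasDerivAt (fun s => sig (P l) (μ l) (x s))
      (⟪x t, mApp (P l) v⟫ + ⟪v, mApp (P l) (x t - μ l)⟫) t := by
    intro l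
    have h1 : HasDerivAt (fun s => x s - μ l) v t := hx.sub_const (μ l)
    have h2 : HasDerivAt (fun s => mApp (P l) (x s - μ l)) (mApp (P l) v) t :=
      aux_hasDerivAt_mApp_comp (P l) (fun s => x s - μ l) v t h1
    exact hx.inner ℝ h2
  have hterm : ∀ l : Fin L, HasDerivAt (fun s => max (sig (P l) (μ l) (x s)) 0 ^ 2)
      (2 * max (sig (P l) (μ l) (x t)) 0 *
        (⟪x t, mApp (P l) v⟫ + ⟪v, mApp (P l) (x t - μ l)⟫)) t := by
    intro l
    exact (aux_hasDerivAt_maxsq (sig (P l) (μ l) (x t))).comp t (hsig l)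
  have hsum := HasDerivAt.fun_sum (u := Finset.univ) (fun l _ => hterm l)
  have htot := h0.add hsum
  refine htot.congr_deriv ?_
  symm
  rw [gradV]
  rw [inner_add_left, real_inner_smul_left, real_inner_smul_left, sum_inner,
    Finset.mul_sum]
  have hA : 2 * ⟪mApp P₀ (x t), v⟫ = ⟪x t, mApp P₀ v⟫ + ⟪v, mApp P₀ (x t)⟫ := by
    have e1 : ⟪mApp P₀ (x t), v⟫ = ⟪x t, mApp P₀ v⟫ := aux_mApp_symm hP₀ _ _
    have e2 : ⟪v, mApp P₀ (x t)⟫ = ⟪mApp P₀ (x t), v⟫ := real_inner_comm _ _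
    rw [e2, e1]; ring
  rw [hA]
  congr 1
  apply Finset.sum_congr rfl
  intro l _
  have hPsym : ∀ (u w : EuclideanSpace ℝ (Fin d)),
      ⟪mApp (P l) u, w⟫ = ⟪u, mApp (P l) w⟫ := aux_mApp_symm (hP l)
  rw [real_inner_smul_left]
  have a1 : ⟪mApp (P l) ((2:ℝ) • x t - μ l), v⟫
      = ⟪(2:ℝ) • x t - μ l, mApp (P l) v⟫ := hPsym _ _
  have a2 : ⟪v, mApp (P l) (x t - μ l)⟫ = ⟪x t - μ l, mApp (P l) v⟫ := by
    rw [real_inner_comm]; exact hPsym _ _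
  rw [a1, a2, inner_sub_left, inner_sub_left, real_inner_smul_left]
  ring

/-- `⟨∇V(y), y⟩ ≥ 2 V(y)`. -/
lemma aux_inner_gradV_self {d L : ℕ} (P₀ : Matrix (Fin d) (Fin d) ℝ)
    (P : Fin L → Matrix (Fin d) (Fin d) ℝ) (μ : Fin L → EuclideanSpace ℝ (Fin d))
    (hP₀ : P₀.IsHermitian) (hP : ∀ l, (P l).PosSemidef)
    (y : EuclideanSpace ℝ (Fin d)) :
    2 * V P₀ P μ y ≤ ⟪gradV P₀ P μ y, y⟫ := by
  rw [gradV, V, inner_add_left, real_inner_smul_left, real_inner_smul_left,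
    sum_inner]
  have h0 : ⟪mApp P₀ y, y⟫ = ⟪y, mApp P₀ y⟫ := real_inner_comm _ _
  rw [h0, mul_add]
  have hterm : ∀ l ∈ (Finset.univ : Finset (Fin L)),
      2 * (max (sig (P l) (μ l) y) 0 ^ 2)
        ≤ 2 * ⟪max (sig (P l) (μ l) y) 0 • mApp (P l) ((2:ℝ) • y - μ l), y⟫ := by
    intro l _
    have hPsym : ∀ (u w : EuclideanSpace ℝ (Fin d)),
        ⟪mApp (P l) u, w⟫ = ⟪u, mApp (P l) w⟫ :=
      aux_mApp_symm (hP l).isHermitian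
    set m := max (sig (P l) (μ l) y) 0 with hm
    have hm0 : 0 ≤ m := le_max_right _ _
    have hyy : 0 ≤ ⟪y, mApp (P l) y⟫ := aux_mApp_nonneg (hP l) y
    have hexp : ⟪mApp (P l) ((2:ℝ) • y - μ l), y⟫
        = ⟪y, mApp (P l) y⟫ + sig (P l) (μ l) y := by
      rw [hPsym ((2:ℝ) • y - μ l) y, inner_sub_left, real_inner_smul_left, sig]
      have hsub : mApp (P l) (y - μ l) = mApp (P l) y - mApp (P l) (μ l) := by
        simp [mApp, map_sub]
      rw [hsub, inner_sub_right]
      have hc : ⟪μ l, mApp (P l) y⟫ = ⟪y, mApp (P l) (μ l)⟫ := by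
        rw [← hPsym (μ l) y, real_inner_comm]
      rw [hc]; ring
    have hms : m * sig (P l) (μ l) y = m ^ 2 := by
      rcases le_total (sig (P l) (μ l) y) 0 with h' | h'
      · simp [hm, max_eq_right h']
      · rw [hm, max_eq_left h']; ring
    rw [real_inner_smul_left, hexp]
    nlinarith [mul_nonneg hm0 hyy, hms]
  have hsum2 : 2 * ∑ l, max (sig (P l) (μ l) y) 0 ^ 2
      ≤ 2 * ∑ l, ⟪max (sig (P l) (μ l) y) 0 • mApp (P l) ((2:ℝ) • y - μ l), y⟫ := by
    rw [Finset.mul_sum, Finset.mul_sum]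
    exact Finset.sum_le_sum hterm
  linarith

/-- `V(y) ≥ λ‖y‖²` (hence `V ≥ 0`). -/
lemma aux_V_lb {d L : ℕ} (P₀ : Matrix (Fin d) (Fin d) ℝ)
    (P : Fin L → Matrix (Fin d) (Fin d) ℝ) (μ : Fin L → EuclideanSpace ℝ (Fin d))
    {lam : ℝ}
    (hlb : ∀ x : EuclideanSpace ℝ (Fin d), lam * ‖x‖ ^ 2 ≤ ⟪x, mApp P₀ x⟫)
    (y : EuclideanSpace ℝ (Fin d)) : lam * ‖y‖ ^ 2 ≤ V P₀ P μ y := by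
  have h1 := hlb y
  have h2 : (0:ℝ) ≤ ∑ l, max (sig (P l) (μ l) y) 0 ^ 2 :=
    Finset.sum_nonneg fun l _ => sq_nonneg _
  rw [V]; linarith

/-- `‖∇V(y)‖² ≥ 4λ V(y)`. -/
lemma aux_grad_sq_lower {d L : ℕ} (P₀ : Matrix (Fin d) (Fin d) ℝ)
    (P : Fin L → Matrix (Fin d) (Fin d) ℝ) (μ : Fin L → EuclideanSpace ℝ (Fin d))
    (hP₀ : P₀.IsHermitian) (hP : ∀ l, (P l).PosSemidef)
    {lam : ℝ} (hlam : 0 < lam)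
    (hlb : ∀ x : EuclideanSpace ℝ (Fin d), lam * ‖x‖ ^ 2 ≤ ⟪x, mApp P₀ x⟫)
    (y : EuclideanSpace ℝ (Fin d)) :
    4 * lam * V P₀ P μ y ≤ ‖gradV P₀ P μ y‖ ^ 2 := by
  have h2V := aux_inner_gradV_self P₀ P μ hP₀ hP y
  have hVlb := aux_V_lb P₀ P μ hlb y
  have hV0 : 0 ≤ V P₀ P μ y :=
    le_trans (by positivity) hVlb
  have hcs : ⟪gradV P₀ P μ y, y⟫ ≤ ‖gradV P₀ P μ y‖ * ‖y‖ :=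
    real_inner_le_norm _ _
  rcases eq_or_lt_of_le hV0 with h | h
  · rw [← h, mul_zero]; exact sq_nonneg _
  · have hgy : 2 * V P₀ P μ y ≤ ‖gradV P₀ P μ y‖ * ‖y‖ := le_trans h2V hcs
    nlinarith [norm_nonneg (gradV P₀ P μ y), norm_nonneg y,
      sq_nonneg (‖gradV P₀ P μ y‖ * ‖y‖ - 2 * V P₀ P μ y),
      mul_le_mul_of_nonneg_left hVlb (sq_nonneg ‖gradV P₀ P μ y‖)]

/-- The key derivative bound along the closed loop. -/
lemma aux_key_bound {d L : ℕ} (P₀ : Matrix (Fin d) (Fin d) ℝ)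
    (P : Fin L → Matrix (Fin d) (Fin d) ℝ) (μ : Fin L → EuclideanSpace ℝ (Fin d))
    (fhat : EuclideanSpace ℝ (Fin d) → EuclideanSpace ℝ (Fin d))
    {ρ₀ : ℝ} (hρ₀ : 0 < ρ₀) {κ : ℝ} (hκ : 0 < κ)
    (e' : EuclideanSpace ℝ (Fin d)) (he' : ‖e'‖ ^ 2 ≤ κ)
    (y : EuclideanSpace ℝ (Fin d)) :
    ⟪gradV P₀ P μ y, fhat y + uhat P₀ P μ fhat ρ₀ y + e'⟫ ≤
      -(ρ₀ * ‖gradV P₀ P μ y‖ ^ 2) + ‖gradV P₀ P μ y‖ * Real.sqrt κ := by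
  set g := gradV P₀ P μ y with hg
  set a := aFun P₀ P μ fhat y with ha
  set ρ := rhoFun P₀ P μ fhat ρ₀ y with hρdef
  have hge : ⟪g, e'⟫ ≤ ‖g‖ * Real.sqrt κ := by
    have h1 := real_inner_le_norm g e'
    have h2 : ‖e'‖ ≤ Real.sqrt κ := by
      rw [← Real.sqrt_sq (norm_nonneg e')]
      exact Real.sqrt_le_sqrt he'
    calc ⟪g, e'⟫ ≤ ‖g‖ * ‖e'‖ := h1
      _ ≤ ‖g‖ * Real.sqrt κ := by
        exact mul_le_mul_of_nonneg_left h2 (norm_nonneg g)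
  have hρ_ge : ρ₀ * ‖g‖ ^ 2 ≤ ρ := by
    rw [hρdef, rhoFun]
    have h4 : ‖gradV P₀ P μ y‖ ^ 2 = Real.sqrt (‖gradV P₀ P μ y‖ ^ 4) := by
      rw [show ‖gradV P₀ P μ y‖ ^ 4 = (‖gradV P₀ P μ y‖ ^ 2) ^ 2 by ring,
        Real.sqrt_sq (sq_nonneg _)]
    rw [← hg, ← ha, h4]
    have h5 : Real.sqrt (‖g‖ ^ 4) ≤ Real.sqrt (a ^ 2 + ‖g‖ ^ 4) :=
      Real.sqrt_le_sqrt (by nlinarith [sq_nonneg a])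
    exact mul_le_mul_of_nonneg_left h5 hρ₀.le
  rw [inner_add_right, inner_add_right]
  have hfa : ⟪g, fhat y⟫ = a := rfl
  rw [hfa]
  rw [uhat]
  split_ifs with h
  · rw [← hg, ← ha, ← hρdef, real_inner_smul_right, real_inner_self_eq_norm_sq]
    have hgne : ‖g‖ ^ 2 ≠ 0 := by
      have hne : g ≠ 0 := hg ▸ h.1
      exact pow_ne_zero 2 (norm_ne_zero_iff.mpr hne)
    rw [neg_mul, div_mul_cancel₀ _ hgne]
    linarith
  · rw [inner_zero_right]
    push_neg at h
    rcases eq_or_ne g 0 with hg0 | hg0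
    · have ha0 : a = 0 := by rw [← hfa, hg0, inner_zero_left]
      have hge0 : (⟪g, e'⟫ : ℝ) = 0 := by rw [hg0, inner_zero_left]
      have hn : ‖g‖ = 0 := by rw [hg0, norm_zero]
      rw [ha0, hge0, hn]
      simp
    · have hle : a + ρ ≤ 0 := h (by rw [hg] at hg0; exact hg0)
      linarith

end Aux
/-- under the hypotheses of the perturbed closed loop (Sontag feedback
`û`, `ρ₀ > 0`, disturbance bound `‖e(t)‖² ≤ κ`, `κ > 0`, and `λ > 0` with
`⟨x, P₀ x⟩ ≥ λ‖x‖²`), every differentiable solution satisfies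
`limsup_{t→∞} V(x(t)) ≤ 2κ/(λ ρ₀²)`; i.e. the trajectories are globally uniformly
ultimately bounded and converge to the sublevel set `{y : V(y) ≤ 2κ/(λ ρ₀²)}`. -/
theorem stmt_16 {d L : ℕ} (P₀ : Matrix (Fin d) (Fin d) ℝ)
    (P : Fin L → Matrix (Fin d) (Fin d) ℝ) (μ : Fin L → EuclideanSpace ℝ (Fin d))
    (hP₀ : P₀.PosDef) (hP : ∀ l, (P l).PosDef)
    (fhat : EuclideanSpace ℝ (Fin d) → EuclideanSpace ℝ (Fin d))
    (ρ₀ : ℝ) (hρ₀ : 0 < ρ₀) (κ : ℝ) (hκ : 0 < κ)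
    (lam : ℝ) (hlam : 0 < lam)
    (hlb : ∀ x : EuclideanSpace ℝ (Fin d), lam * ‖x‖ ^ 2 ≤ ⟪x, mApp P₀ x⟫)
    (e : ℝ → EuclideanSpace ℝ (Fin d)) (he : ∀ t : ℝ, 0 ≤ t → ‖e t‖ ^ 2 ≤ κ)
    (x : ℝ → EuclideanSpace ℝ (Fin d))
    (hx : ∀ t : ℝ, 0 ≤ t →
      HasDerivAt x (fhat (x t) + uhat P₀ P μ fhat ρ₀ (x t) + e t) t) :
    Filter.limsup (fun t : ℝ => V P₀ P μ (x t)) Filter.atTop ≤ 2 * κ / (lam * ρ₀ ^ 2) ∧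
      ∀ ε : ℝ, 0 < ε → ∀ᶠ t : ℝ in Filter.atTop,
        V P₀ P μ (x t) ≤ 2 * κ / (lam * ρ₀ ^ 2) + ε := by
  classical
  set W : ℝ → ℝ := fun t => V P₀ P μ (x t) with hWdef
  set D : ℝ → ℝ := fun t =>
    ⟪gradV P₀ P μ (x t), fhat (x t) + uhat P₀ P μ fhat ρ₀ (x t) + e t⟫ with hDdef
  set c : ℝ := 2 * κ / (lam * ρ₀ ^ 2) with hcdef
  set δ : ℝ := 4 * κ / ρ₀ with hδdef
  have hc_pos : 0 < c := by positivity
  have hδ_pos : 0 < δ := by positivity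
  -- derivative of W
  have hWd : ∀ t : ℝ, 0 ≤ t → HasDerivAt W (D t) t := fun t ht =>
    aux_hasDerivAt_V_comp P₀ P μ hP₀.1 (fun l => (hP l).1) x _ t (hx t ht)
  -- nonnegativity of W
  have hW0 : ∀ t : ℝ, 0 ≤ W t := fun t =>
    le_trans (by positivity) (aux_V_lb P₀ P μ hlb (x t))
  -- decay while above the level set
  have hDle : ∀ t : ℝ, 0 ≤ t → c ≤ W t → D t ≤ -δ := by
    intro t ht hct
    have hk := aux_key_bound P₀ P μ fhat hρ₀ hκ (e t) (he t ht) (x t)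
    have hg2 := aux_grad_sq_lower P₀ P μ hP₀.1 (fun l => (hP l).posSemidef)
      hlam hlb (x t)
    set g : ℝ := ‖gradV P₀ P μ (x t)‖ with hgdef
    have hg0 : 0 ≤ g := norm_nonneg _
    set s : ℝ := Real.sqrt κ with hsdef
    have hs0 : 0 ≤ s := Real.sqrt_nonneg κ
    have hs2 : s ^ 2 = κ := Real.sq_sqrt hκ.le
    have h8 : 8 * κ ≤ ρ₀ ^ 2 * g ^ 2 := by
      have h1 : 4 * lam * c ≤ 4 * lam * W t := by nlinarith
      have h2 : 4 * lam * c = 8 * κ / ρ₀ ^ 2 := by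
        rw [hcdef]; field_simp; ring
      have h3 : 8 * κ / ρ₀ ^ 2 ≤ g ^ 2 := by
        rw [← h2]; exact le_trans h1 hg2
      calc 8 * κ = (8 * κ / ρ₀ ^ 2) * ρ₀ ^ 2 := by field_simp
        _ ≤ g ^ 2 * ρ₀ ^ 2 := by
          exact mul_le_mul_of_nonneg_right h3 (sq_nonneg ρ₀)
        _ = ρ₀ ^ 2 * g ^ 2 := by ring
    have hkk : D t ≤ -(ρ₀ * g ^ 2) + g * s := hk
    -- multiply through by ρ₀
    rw [show -δ = -(4 * κ) / ρ₀ by rw [hδdef]; ring, le_div_iff₀ hρ₀]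
    have hk2 : D t * ρ₀ ≤ (-(ρ₀ * g ^ 2) + g * s) * ρ₀ :=
      mul_le_mul_of_nonneg_right hkk hρ₀.le
    nlinarith [sq_nonneg (ρ₀ * g - 2 * s), hk2, h8, hs2, hs0, hg0, hρ₀]
  -- Step 1: the trajectory reaches the sublevel set
  have hreach : ∃ t₀ : ℝ, 0 ≤ t₀ ∧ W t₀ ≤ c := by
    by_contra hA
    push_neg at hA
    set T : ℝ := W 0 / δ + 1 with hTdef
    have hT0 : 0 < T := by
      rw [hTdef]
      have h0 : 0 ≤ W 0 / δ := div_nonneg (hW0 0) hδ_pos.le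
      linarith
    have hanti : AntitoneOn (fun u => W u + δ * u) (Set.Icc 0 T) := by
      apply antitoneOn_of_deriv_nonpos (convex_Icc 0 T)
      · intro u hu
        exact (((hWd u hu.1).add ((hasDerivAt_id u).const_mul δ)).continuousAt).continuousWithinAt
      · intro u hu
        rw [interior_Icc] at hu
        exact (((hWd u hu.1.le).add ((hasDerivAt_id u).const_mul δ)).differentiableAt).differentiableWithinAt
      · intro u hu
        rw [interior_Icc] at hu
        have hder : HasDerivAt (fun u => W u + δ * u) (D u + δ) u := by
          have := (hWd u hu.1.le).add ((hasDerivAt_id u).const_mul δ)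
          simp only [mul_one] at this
          exact this
        rw [hder.deriv]
        have := hDle u hu.1.le (hA u hu.1.le).le
        linarith
    have h1 : W T + δ * T ≤ W 0 + δ * 0 :=
      hanti ⟨le_refl 0, hT0.le⟩ ⟨hT0.le, le_refl T⟩ hT0.le
    have h2 : δ * T = W 0 + δ := by
      rw [hTdef, mul_add, mul_one, mul_comm δ (W 0 / δ),
        div_mul_cancel₀ _ (ne_of_gt hδ_pos)]
    have := hW0 T
    linarith
  -- Step 2: invariance of the sublevel set
  have hinv : ∀ t₀ : ℝ, 0 ≤ t₀ → W t₀ ≤ c → ∀ t : ℝ, t₀ ≤ t → W t ≤ c := by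
    intro t₀ ht₀ hWt₀ t₁ ht₁
    by_contra hgt
    push_neg at hgt
    have hcont : ContinuousOn W (Set.Icc t₀ t₁) := by
      intro u hu
      exact ((hWd u (le_trans ht₀ hu.1)).continuousAt).continuousWithinAt
    set S : Set ℝ := Set.Icc t₀ t₁ ∩ W ⁻¹' Set.Iic c with hSdef
    have hScl : IsClosed S :=
      hcont.preimage_isClosed_of_isClosed isClosed_Icc isClosed_Iic
    have hScp : IsCompact S :=
      IsCompact.of_isClosed_subset isCompact_Icc hScl Set.inter_subset_left
    have hSne : S.Nonempty := ⟨t₀, ⟨le_refl t₀, ht₁⟩, hWt₀⟩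
    obtain ⟨s, hsS, hsub⟩ := hScp.exists_isGreatest hSne
    have hsc : W s ≤ c := hsS.2
    have hs01 : s ∈ Set.Icc t₀ t₁ := hsS.1
    have hslt : s < t₁ := by
      rcases lt_or_eq_of_le hs01.2 with h | h
      · exact h
      · exfalso; rw [h] at hsc; linarith
    have hmid : ∀ u ∈ Set.Ioc s t₁, c < W u := by
      intro u hu
      by_contra hle
      push_neg at hle
      have : u ∈ S := ⟨⟨le_trans hs01.1 hu.1.le, hu.2⟩, hle⟩
      exact absurd (hsub this) (not_le.mpr hu.1)
    have hanti : StrictAntiOn W (Set.Icc s t₁) := by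
      apply strictAntiOn_of_deriv_neg (convex_Icc s t₁)
      · intro u hu
        exact ((hWd u (le_trans (le_trans ht₀ hs01.1) hu.1)).continuousAt).continuousWithinAt
      · intro u hu
        rw [interior_Icc] at hu
        have hu0 : 0 ≤ u := le_trans (le_trans ht₀ hs01.1) hu.1.le
        rw [(hWd u hu0).deriv]
        have := hDle u hu0 (hmid u ⟨hu.1, hu.2.le⟩).le
        linarith
    have : W t₁ < W s :=
      hanti ⟨le_refl s, hslt.le⟩ ⟨hslt.le, le_refl t₁⟩ hslt
    linarith
  obtain ⟨t₀, ht₀, hWt₀⟩ := hreach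
  have hev : ∀ᶠ t : ℝ in Filter.atTop, W t ≤ c :=
    Filter.eventually_atTop.mpr ⟨t₀, fun t ht => hinv t₀ ht₀ hWt₀ t ht⟩
  constructor
  · exact Filter.limsup_le_of_le
      (Filter.isCoboundedUnder_le_of_le Filter.atTop (x := 0) hW0) hev
  · intro ε hε
    filter_upwards [hev] with t ht
    linarith
end
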